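/- Let G be a group and let A, B ∈ G be elements such that the four elements A, B, A⁻¹, B⁻¹ are pairwise distinct; let S = {A, B, A⁻¹, B⁻¹}. For each T ∈ S, let s_T : Fin 3 → G be an injective function whose image is S \ {T⁻¹}. Then the set of good tails, i.e., the set of pairs (b', b) ∈ Fin 3 × Fin 3 such that the function T ↦ s_{s_T(b')}(b) is constant on S, has cardinality at most 6. -/

import Mathlib

/-- **At most six good tails.** Let `G` be a group with elements `A, B` such that
`A, B, A⁻¹, B⁻¹` are pairwise distinct, and let `S = {A, B, A⁻¹, B⁻¹}`. Suppose for each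
`T ∈ S` we are given an injective map `s T : Fin 3 → G` with range `S \ {T⁻¹}`. Then the
set of good tails, i.e. pairs `(b', b)` such that `T ↦ s (s T b') b` is constant on `S`,
has cardinality at most `6`. -/
theorem good_tails_card_le_six {G : Type*} [Group G] (A B : G)
    (hdistinct : ([A, B, A⁻¹, B⁻¹] : List G).Nodup)
    (s : G → Fin 3 → G)
    (hs : ∀ T ∈ ({A, B, A⁻¹, B⁻¹} : Set G),
      Function.Injective (s T) ∧ Set.range (s T) = ({A, B, A⁻¹, B⁻¹} : Set G) \ {T⁻¹}) :
    {bb : Fin 3 × Fin 3 | ∀ T ∈ ({A, B, A⁻¹, B⁻¹} : Set G),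
      ∀ T' ∈ ({A, B, A⁻¹, B⁻¹} : Set G), s (s T bb.1) bb.2 = s (s T' bb.1) bb.2}.ncard ≤ 6 := by
  classical
  set S : Set G := {A, B, A⁻¹, B⁻¹} with hSdef
  simp only [List.nodup_cons, List.mem_cons, List.mem_singleton, List.not_mem_nil, or_false,
    not_or, List.nodup_nil, and_true] at hdistinct
  obtain ⟨⟨hAB, hAAi, hABi⟩, ⟨hBAi, hBBi⟩, hAiBi⟩ := hdistinct
  have hAS : A ∈ S := by simp [hSdef]
  have hSinv : ∀ x ∈ S, x⁻¹ ∈ S := by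
    intro x hx
    rcases hx with rfl | rfl | rfl | rfl <;> simp [hSdef]
  have hSfin : S.Finite := by
    apply Set.Finite.insert; apply Set.Finite.insert; apply Set.Finite.insert
    exact Set.finite_singleton _
  have hScard : S.ncard = 4 := by
    rw [hSdef]
    rw [Set.ncard_insert_of_notMem (by simp [hAB, hAAi, hABi]) (by
      apply Set.Finite.insert; apply Set.Finite.insert; exact Set.finite_singleton _)]
    rw [Set.ncard_insert_of_notMem (by simp [hBAi, hBBi]) (by
      apply Set.Finite.insert; exact Set.finite_singleton _)]
    rw [Set.ncard_insert_of_notMem (by simp [hAiBi]), Set.ncard_singleton]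
  set Good : Set (Fin 3 × Fin 3) := {bb : Fin 3 × Fin 3 | ∀ T ∈ S,
      ∀ T' ∈ S, s (s T bb.1) bb.2 = s (s T' bb.1) bb.2} with hGood
  -- key fiber bound
  have key : ∀ b' : Fin 3, ∃ U ∈ S, ∃ t : Set G, t.Finite ∧ t.ncard ≤ 2 ∧
      ∀ b : Fin 3, (b', b) ∈ Good → s U b ∈ t := by
    intro b'
    have hVmem : s A b' ∈ S \ {A⁻¹} := by
      rw [← (hs A hAS).2]; exact Set.mem_range_self _
    set V := s A b' with hV
    have hVS : V ∈ S := hVmem.1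
    have hViS : V⁻¹ ∈ S := hSinv V hVS
    have hUmem : s V⁻¹ b' ∈ S \ {V⁻¹⁻¹} := by
      rw [← (hs V⁻¹ hViS).2]; exact Set.mem_range_self _
    set U := s V⁻¹ b' with hU
    have hUS : U ∈ S := hUmem.1
    have hUV : U ≠ V := by
      intro h
      exact hUmem.2 (by simp [h])
    refine ⟨U, hUS, S \ {U⁻¹, V⁻¹}, hSfin.diff, ?_, ?_⟩
    · have hsub : ({U⁻¹, V⁻¹} : Set G) ⊆ S := by
        intro x hx; rcases hx with rfl | rfl
        · exact hSinv U hUS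
        · exact hViS
      rw [Set.ncard_diff hsub (Set.toFinite _), hScard,
        Set.ncard_pair (by simpa using fun h => hUV (inv_injective h))]
    · intro b hb
      have h1 : s U b = s V b := hb V⁻¹ hViS A hAS
      have h2 : s U b ∈ S \ {U⁻¹} := by
        rw [← (hs U hUS).2]; exact Set.mem_range_self _
      have h3 : s U b ∈ S \ {V⁻¹} := by
        rw [h1, ← (hs V hVS).2]; exact Set.mem_range_self _
      refine ⟨h2.1, ?_⟩
      simp only [Set.mem_insert_iff, Set.mem_singleton_iff, not_or]
      exact ⟨fun h => h2.2 h, fun h => h3.2 h⟩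
  -- counting
  have hGfin : Good.Finite := Set.toFinite _
  rw [Set.ncard_eq_toFinset_card _ hGfin]
  set F : Finset (Fin 3 × Fin 3) := hGfin.toFinset with hF
  have hsplit : F.card = ∑ b' : Fin 3, (F.filter fun p => p.1 = b').card := by
    exact Finset.card_eq_sum_card_fiberwise (fun x _ => Finset.mem_univ x.1)
  rw [hsplit]
  have hbound : ∀ b' : Fin 3, (F.filter fun p => p.1 = b').card ≤ 2 := by
    intro b'
    obtain ⟨U, hUS, t, htfin, htc, hmap⟩ := key b'
    have : (F.filter fun p => p.1 = b').card ≤ htfin.toFinset.card := by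
      apply Finset.card_le_card_of_injOn (fun p => s U p.2)
      · intro p hp
        simp only [Finset.mem_coe, Finset.mem_filter, hF, Set.Finite.mem_toFinset] at hp ⊢
        have := hmap p.2 (by rw [← hp.2]; exact hp.1)
        exact this
      · intro p hp q hq h
        simp only [Finset.mem_coe, Finset.mem_filter] at hp hq
        have := (hs U hUS).1 h
        exact Prod.ext (hp.2.trans hq.2.symm) this
    calc (F.filter fun p => p.1 = b').card ≤ htfin.toFinset.card := this
      _ = t.ncard := (Set.ncard_eq_toFinset_card _ htfin).symm
      _ ≤ 2 := htc
  calc ∑ b' : Fin 3, (F.filter fun p => p.1 = b').card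
      ≤ ∑ _b' : Fin 3, 2 := Finset.sum_le_sum fun b' _ => hbound b'
    _ = 6 := by simp
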